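/- Let y be a fractional cache state, assume k ≥ 1, and let g ∈ ℝ^N be the supergradient vector with components g_l = ( c(π_{i*(l)+1}) − c(l) ) · 𝟙{ l* ≤ i*(l) }, where l* = π^{−1}(l) and i*(l) = max{ i ∈ {1,…,K−1} : ∑_{j=1}^{i} y_{π_j} ≤ k and l+N ∉ {π_1,…,π_i} }. Then 0 ≤ g_l ≤ c(π_K) for every l ∈ {1,…,N}; in particular, since π_K > N, the ℓ∞ norm of g satisfies ‖g‖_∞ ≤ c(π_K − N) + c_f, i.e., the subgradients are bounded by the dissimilarity cost of the k-th closest catalog object plus the fetching cost. -/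

import Mathlib

namespace ACAI

/-- `sigma N π i` = number of indices `j ∈ {1,…,i}` with `π j > N`, i.e. the number of
objects among the `i` cheapest that are served from the server. -/
def sigma (N : ℕ) (π : ℕ → ℕ) (i : ℕ) : ℕ :=
  ((Finset.Icc 1 i).filter (fun j => N < π j)).card

/-- `Kmin N k π` = least index `i` with `sigma N π i = k`. -/
noncomputable def Kmin (N k : ℕ) (π : ℕ → ℕ) : ℕ :=
  sInf {i | sigma N π i = k}

/-- `alpha c π i = c (π (i+1)) - c (π i)`. -/
noncomputable def alpha (c : ℕ → ℝ) (π : ℕ → ℕ) (i : ℕ) : ℝ :=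
  c (π (i + 1)) - c (π i)

/-- A fractional cache state: `y ∈ [0,1]^{2N}` with `∑_{i=1}^{N} y i = h` and
`y (i+N) = 1 - y i` for `i ∈ {1,…,N}`. -/
def IsFrac (N h : ℕ) (y : ℕ → ℝ) : Prop :=
  (∀ i ∈ Finset.Icc 1 (2 * N), y i ∈ Set.Icc (0 : ℝ) 1) ∧
  (∑ i ∈ Finset.Icc 1 N, y i = (h : ℝ)) ∧
  (∀ i ∈ Finset.Icc 1 N, y (i + N) = 1 - y i)

/-- An integral cache state: a fractional cache state with `{0,1}` coordinates. -/
def IsInt (N h : ℕ) (y : ℕ → ℝ) : Prop :=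
  IsFrac N h y ∧ ∀ i ∈ Finset.Icc 1 (2 * N), y i = 0 ∨ y i = 1

/-- A request over the augmented catalog `U = {1,…,2N}`: nonnegative costs `c` with
`c (i+N) = c i + cf` for catalog objects `i ∈ {1,…,N}`, and a bijection `π` of
`{1,…,2N}` sorting the costs nondecreasingly and placing each `i ∈ {1,…,N}` before
`i + N`. -/
def Request (N : ℕ) (cf : ℝ) (c : ℕ → ℝ) (π : ℕ → ℕ) : Prop :=
  (∀ i ∈ Finset.Icc 1 (2 * N), 0 ≤ c i) ∧
  (∀ i ∈ Finset.Icc 1 N, c (i + N) = c i + cf) ∧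
  Set.BijOn π (Set.Icc 1 (2 * N)) (Set.Icc 1 (2 * N)) ∧
  (∀ i, 1 ≤ i → i < 2 * N → c (π i) ≤ c (π (i + 1))) ∧
  (∀ j l, j ∈ Set.Icc 1 (2 * N) → l ∈ Set.Icc 1 (2 * N) →
    π j ≤ N → π l = π j + N → j < l)

/-- The caching gain
`G(y) = ∑_{i=1}^{K-1} α_i · min { k - σ_i, (∑_{j=1}^{i} y_{π j}) - σ_i }`. -/
noncomputable def gain (N k : ℕ) (c : ℕ → ℝ) (π : ℕ → ℕ) (y : ℕ → ℝ) : ℝ :=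
  ∑ i ∈ Finset.Icc 1 (Kmin N k π - 1),
    alpha c π i *
      min ((k : ℝ) - sigma N π i) ((∑ j ∈ Finset.Icc 1 i, y (π j)) - sigma N π i)

open Classical in
/-- `Iset N π i = { j ∈ {1,…,i} : π j ≤ N and π j + N ∉ {π 1, …, π i} }`. -/
noncomputable def Iset (N : ℕ) (π : ℕ → ℕ) (i : ℕ) : Finset ℕ :=
  (Finset.Icc 1 i).filter (fun j => π j ≤ N ∧ ∀ l ∈ Finset.Icc 1 i, π l ≠ π j + N)

/-- The auxiliary (multilinear) gain
`L(y) = ∑_{i=1}^{K-1} α_i (k - σ_i) (1 - ∏_{j ∈ I_i} (1 - y_{π j}/(k - σ_i)))`. -/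
noncomputable def aux (N k : ℕ) (c : ℕ → ℝ) (π : ℕ → ℕ) (y : ℕ → ℝ) : ℝ :=
  ∑ i ∈ Finset.Icc 1 (Kmin N k π - 1),
    alpha c π i * ((k : ℝ) - sigma N π i) *
      (1 - ∏ j ∈ Iset N π i, (1 - y (π j) / ((k : ℝ) - sigma N π i)))

/-- `istar N k π y l` = largest `i ∈ {1,…,K-1}` such that `∑_{j=1}^{i} y_{π j} ≤ k`
and `l + N ∉ {π 1, …, π i}`. -/
noncomputable def istar (N k : ℕ) (π : ℕ → ℕ) (y : ℕ → ℝ) (l : ℕ) : ℕ :=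
  sSup {i | i ∈ Finset.Icc 1 (Kmin N k π - 1) ∧
    (∑ j ∈ Finset.Icc 1 i, y (π j)) ≤ (k : ℝ) ∧
    ∀ v ∈ Finset.Icc 1 i, π v ≠ l + N}

/-- The supergradient vector: `g l = (c (π (i*(l)+1)) - c l) · 𝟙{l* ≤ i*(l)}`, where
`l* = π⁻¹ l` is given by the function `lstar`. -/
noncomputable def superg (N k : ℕ) (c : ℕ → ℝ) (π : ℕ → ℕ) (y : ℕ → ℝ)
    (lstar : ℕ → ℕ) (l : ℕ) : ℝ :=
  if lstar l ≤ istar N k π y l then c (π (istar N k π y l + 1)) - c l else 0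

lemma ivt_nat (f : ℕ → ℕ) (h0 : f 0 = 0) (hstep : ∀ i, f (i + 1) ≤ f i + 1)
    (M m : ℕ) (hm : m ≤ f M) : ∃ i ≤ M, f i = m := by
  induction M with
  | zero => exact ⟨0, le_refl 0, by omega⟩
  | succ M ih =>
    by_cases hc : m ≤ f M
    · obtain ⟨i, hi, hfi⟩ := ih hc
      exact ⟨i, by omega, hfi⟩
    · have := hstep M
      exact ⟨M + 1, le_refl _, by omega⟩

lemma sigma_succ (N : ℕ) (π : ℕ → ℕ) (i : ℕ) :
    sigma N π (i + 1) = sigma N π i + (if N < π (i + 1) then 1 else 0) := by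
  unfold sigma
  have hins : Finset.Icc 1 (i + 1) = insert (i + 1) (Finset.Icc 1 i) := by
    ext x; simp [Finset.mem_Icc]; omega
  rw [hins, Finset.filter_insert]
  split
  · rw [Finset.card_insert_of_notMem (by simp [Finset.mem_Icc])]
  · simp

lemma sigma_zero (N : ℕ) (π : ℕ → ℕ) : sigma N π 0 = 0 := by
  simp [sigma]

lemma sigma_2N (N : ℕ) (π : ℕ → ℕ)
    (hbij : Set.BijOn π (Set.Icc 1 (2 * N)) (Set.Icc 1 (2 * N))) :
    sigma N π (2 * N) = N := by
  unfold sigma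
  have hcard : ((Finset.Icc 1 (2 * N)).filter (fun j => N < π j)).card
      = ((Finset.Icc 1 (2 * N)).filter (fun m => N < m)).card := by
    apply Finset.card_bij (fun j _ => π j)
    · intro a ha
      simp only [Finset.mem_filter, Finset.mem_Icc] at ha ⊢
      have := hbij.1 (show a ∈ Set.Icc 1 (2 * N) by
        simp [Set.mem_Icc]; omega)
      simp only [Set.mem_Icc] at this
      exact ⟨this, ha.2⟩
    · intro a ha b hb hab
      simp only [Finset.mem_filter, Finset.mem_Icc] at ha hb
      exact hbij.2.1 (by simp [Set.mem_Icc]; omega) (by simp [Set.mem_Icc]; omega) hab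
    · intro b hb
      simp only [Finset.mem_filter, Finset.mem_Icc] at hb
      obtain ⟨a, ha, hab⟩ := hbij.2.2 (show b ∈ Set.Icc 1 (2 * N) by
        simp [Set.mem_Icc]; omega)
      simp only [Set.mem_Icc] at ha
      refine ⟨a, ?_, hab⟩
      simp only [Finset.mem_filter, Finset.mem_Icc]
      exact ⟨⟨ha.1, ha.2⟩, by omega⟩
  rw [hcard]
  have : (Finset.Icc 1 (2 * N)).filter (fun m => N < m) = Finset.Icc (N + 1) (2 * N) := by
    ext x; simp [Finset.mem_Icc]; omega
  rw [this, Nat.card_Icc]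
  omega

lemma mono_cpi (N : ℕ) (c : ℕ → ℝ) (π : ℕ → ℕ)
    (hsort : ∀ i, 1 ≤ i → i < 2 * N → c (π i) ≤ c (π (i + 1)))
    (a b : ℕ) (ha : 1 ≤ a) (hab : a ≤ b) (hb : b ≤ 2 * N) :
    c (π a) ≤ c (π b) := by
  induction b with
  | zero => omega
  | succ b ih =>
    rcases Nat.lt_or_ge a (b + 1) with hlt | hge
    · have h1 : c (π a) ≤ c (π b) := ih (by omega) (by omega)
      have h2 : c (π b) ≤ c (π (b + 1)) := hsort b (by omega) (by omega)
      linarith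
    · have : a = b + 1 := by omega
      rw [this]

/-- **Subgradient bound (Lemma, Supplementary Sec. H-A).**
For every `l ∈ {1,…,N}`, the supergradient component satisfies
`0 ≤ g l ≤ c (π K)`; in particular (since `π K > N`)
`|g l| ≤ c (π K - N) + c_f`, i.e. the subgradients are bounded in ℓ∞ norm by the
dissimilarity cost of the `k`-th closest catalog object plus the fetching cost. -/
theorem superg_bound
    (N k h : ℕ) (hN : 0 < N) (hk : 0 < k) (hkh : k ≤ h) (hhN : h ≤ N)
    (cf : ℝ) (hcf : 0 < cf) (c : ℕ → ℝ) (π : ℕ → ℕ)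
    (hreq : Request N cf c π)
    (y : ℕ → ℝ) (hy : IsFrac N h y)
    (lstar : ℕ → ℕ)
    (hlstar : ∀ l ∈ Finset.Icc 1 (2 * N),
      lstar l ∈ Finset.Icc 1 (2 * N) ∧ π (lstar l) = l) :
    ∀ l ∈ Finset.Icc 1 N,
      0 ≤ superg N k c π y lstar l ∧
      superg N k c π y lstar l ≤ c (π (Kmin N k π)) ∧
      |superg N k c π y lstar l| ≤ c (π (Kmin N k π) - N) + cf := by
  obtain ⟨hcnn, hcsum, hbij, hsort, hbefore⟩ := hreq
  -- K is well defined
  have hsig2N : sigma N π (2 * N) = N := sigma_2N N π hbij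
  have hstep : ∀ i, sigma N π (i + 1) ≤ sigma N π i + 1 := by
    intro i; rw [sigma_succ]; split <;> omega
  obtain ⟨i0, hi0le, hi0⟩ := ivt_nat (sigma N π) (sigma_zero N π) hstep (2 * N) k
    (by omega)
  have hne : {i | sigma N π i = k}.Nonempty := ⟨i0, hi0⟩
  set K := Kmin N k π with hKdef
  have hKmem : sigma N π K = k := Nat.sInf_mem hne
  have hKle : K ≤ 2 * N := le_trans (Nat.sInf_le (Set.mem_setOf_eq ▸ hi0)) hi0le
  have hK1 : 1 ≤ K := by
    by_contra hc
    have : K = 0 := by omega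
    rw [this, sigma_zero] at hKmem
    omega
  -- π K > N
  have hπK : N < π K := by
    by_contra hc
    push_neg at hc
    have hKeq : K = (K - 1) + 1 := by omega
    have heq : sigma N π ((K-1)+1) = sigma N π (K - 1) + if N < π ((K-1)+1) then 1 else 0 := sigma_succ N π (K - 1)
    rw [← hKeq] at heq
    rw [if_neg (show ¬ N < π K by omega)] at heq
    have hmem : (K - 1) ∈ {i | sigma N π i = k} := by
      simp only [Set.mem_setOf_eq]; omega
    have hle : K ≤ K - 1 := Nat.sInf_le hmem
    omega
  have hπKmem : π K ∈ Set.Icc 1 (2 * N) := hbij.1 (by simp [Set.mem_Icc]; omega)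
  simp only [Set.mem_Icc] at hπKmem
  have hcπK : 0 ≤ c (π K) := hcnn (π K) (by simp [Finset.mem_Icc]; omega)
  have hcπKN : 0 ≤ c (π K - N) := hcnn (π K - N) (by simp [Finset.mem_Icc]; omega)
  have hfetch : c (π K) = c (π K - N) + cf := by
    have := hcsum (π K - N) (by simp [Finset.mem_Icc]; omega)
    rw [show π K - N + N = π K by omega] at this
    exact this
  intro l hl
  simp only [Finset.mem_Icc] at hl
  set S : Set ℕ := {i | i ∈ Finset.Icc 1 (Kmin N k π - 1) ∧
    (∑ j ∈ Finset.Icc 1 i, y (π j)) ≤ (k : ℝ) ∧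
    ∀ v ∈ Finset.Icc 1 i, π v ≠ l + N} with hSdef
  have hSbdd : BddAbove S := by
    refine ⟨K - 1, fun x hx => ?_⟩
    have := hx.1
    simp only [Finset.mem_Icc] at this
    exact this.2
  have histar : istar N k π y l = sSup S := rfl
  have hlstar1 : 1 ≤ lstar l := by
    have := (hlstar l (by simp [Finset.mem_Icc]; omega)).1
    simp only [Finset.mem_Icc] at this
    exact this.1
  have hπlstar : π (lstar l) = l := (hlstar l (by simp [Finset.mem_Icc]; omega)).2
  unfold superg
  rw [histar]
  by_cases hcase : lstar l ≤ sSup S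
  · rw [if_pos hcase]
    -- S is nonempty, so sSup S ∈ S
    have hSne : S.Nonempty := by
      by_contra hc
      rw [Set.not_nonempty_iff_eq_empty] at hc
      rw [hc, csSup_empty] at hcase
      simp at hcase
      omega
    have hsup_mem : sSup S ∈ S := Nat.sSup_mem hSne hSbdd
    have hsupK : sSup S ≤ K - 1 := by
      have := hsup_mem.1
      simp only [Finset.mem_Icc] at this
      exact this.2
    have hsup1 : 1 ≤ sSup S := by
      have := hsup_mem.1
      simp only [Finset.mem_Icc] at this
      exact this.1
    have h1 : c l ≤ c (π (sSup S + 1)) := by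
      calc c l = c (π (lstar l)) := by rw [hπlstar]
        _ ≤ c (π (sSup S + 1)) :=
          mono_cpi N c π hsort (lstar l) (sSup S + 1) hlstar1 (by omega) (by omega)
    have h2 : c (π (sSup S + 1)) ≤ c (π K) :=
      mono_cpi N c π hsort (sSup S + 1) K (by omega) (by omega) (by omega)
    have hcl : 0 ≤ c l := hcnn l (by simp [Finset.mem_Icc]; omega)
    refine ⟨by linarith, by linarith, ?_⟩
    rw [abs_of_nonneg (by linarith), hfetch] at *
    linarith
  · rw [if_neg hcase]
    refine ⟨le_refl 0, hcπK, ?_⟩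
    rw [abs_zero, hfetch] at *
    linarith

end ACAI
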